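/- For positive integers k₁, k₂ and a nonnegative integer k₃ with at most one of k₁,k₂,k₃ equal to zero, and for every M ≥ 1, the truncated Mordell–Tornheim value satisfies ζ^{MT}_M(k₁, k₂; k₃) = Z_M((z_{k₁} ⧢ z_{k₂}) x^{k₃}), where Z_M(y x^{a₁-1} y x^{a₂-1} ⋯ y x^{a_u-1} x^c)-type words are evaluated by the rule Z_M(z_{(h₁,…,h_u)}) = Σ_{0<n₁<⋯<n_u<M} 1/(n₁^{h₁}⋯n_u^{h_u}) after rewriting (z_{k₁} ⧢ z_{k₂}) x^{k₃} as a ℚ-linear combination of monomials z_𝐡. -/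

import Mathlib

/-- The shuffle product of two words, as a multiset of words. -/
def shuffle {α : Type*} : List α → List α → Multiset (List α)
  | [], ys => {ys}
  | x :: xs, [] => {x :: xs}
  | x :: xs, y :: ys =>
      ((shuffle xs (y :: ys)).map (fun w => x :: w))
        + ((shuffle (x :: xs) ys).map (fun w => y :: w))
termination_by xs ys => xs.length + ys.length

/-- `zetaMrev M [k_r, …, k_1] = Σ_{0<n₁<⋯<n_r<M} 1/(n₁^{k₁}⋯n_r^{k_r})`. -/
def zetaMrev : ℕ → List ℕ → ℚ
  | _, [] => 1
  | M, k :: ks => ∑ n ∈ Finset.Ioo 0 M, zetaMrev n ks / (n : ℚ) ^ k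

/-- The truncated MZV `ζ_M(k₁,…,k_r)`. -/
def zetaM (M : ℕ) (ks : List ℕ) : ℚ := zetaMrev M ks.reverse

/-- Recover the index `(k₁,…,k_r)` from the word `z_{k₁}⋯z_{k_r}` over `{x,y}`
(`true = y`, `false = x`). -/
def toIndex (w : List Bool) : List ℕ :=
  w.foldl (fun acc b => if b then acc ++ [1] else acc.dropLast ++ [acc.getLastD 0 + 1]) []

/-- The word `z_{k₁}⋯z_{k_r}` (`true = y`, `false = x`). -/
def wordOf (ks : List ℕ) : List Bool :=
  ks.foldr (fun k acc => (true :: List.replicate (k - 1) false) ++ acc) []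

/-- Truncated Mordell–Tornheim double zeta value
`ζ^{MT}_M(a,b;c) = Σ_{m,n>0, m+n<M} 1/(m^a n^b (m+n)^c)`. -/
def zetaMT (M a b c : ℕ) : ℚ :=
  ∑ p ∈ ((Finset.Ioo 0 M) ×ˢ (Finset.Ioo 0 M)).filter (fun p => p.1 + p.2 < M),
    1 / ((p.1 : ℚ) ^ a * (p.2 : ℚ) ^ b * ((p.1 : ℚ) + (p.2 : ℚ)) ^ c)

/-! ### Basic shuffle lemmas -/

lemma shuffle_nil_left {α : Type*} (ys : List α) : shuffle [] ys = {ys} := by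
  simp [shuffle]

lemma shuffle_nil_right {α : Type*} (xs : List α) : shuffle xs [] = {xs} := by
  cases xs <;> simp [shuffle]

lemma shuffle_cons_cons {α : Type*} (x y : α) (xs ys : List α) :
    shuffle (x :: xs) (y :: ys)
      = ((shuffle xs (y :: ys)).map (fun w => x :: w))
        + ((shuffle (x :: xs) ys).map (fun w => y :: w)) := by
  rw [shuffle]

lemma shuffle_concat {α : Type*} : ∀ (n : ℕ) (xs ys : List α), xs.length + ys.length ≤ n →
    ∀ (x y : α), shuffle (xs ++ [x]) (ys ++ [y])
      = ((shuffle xs (ys ++ [y])).map (fun w => w ++ [x]))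
        + ((shuffle (xs ++ [x]) ys).map (fun w => w ++ [y])) := by
  intro n
  induction n with
  | zero =>
    intro xs ys h x y
    have hx : xs = [] := by cases xs <;> simp_all
    have hy : ys = [] := by cases ys <;> simp_all
    subst hx; subst hy
    simp [shuffle_cons_cons, shuffle_nil_left, shuffle_nil_right]
    exact Multiset.cons_swap _ _ _
  | succ n ih =>
    intro xs ys h x y
    match xs, ys with
    | [], [] =>
      simp [shuffle_cons_cons, shuffle_nil_left, shuffle_nil_right]
      exact Multiset.cons_swap _ _ _
    | [], b :: ys2 =>
      have key := ih [] ys2 (by simp at h ⊢; omega) x y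
      simp only [List.nil_append, shuffle_nil_left, Multiset.map_singleton] at key
      simp only [List.nil_append, List.cons_append, shuffle_cons_cons, shuffle_nil_left,
        Multiset.map_singleton, Multiset.map_add, Multiset.map_map, Function.comp, key]
      abel
    | a :: xs2, [] =>
      have key := ih xs2 [] (by simp at h ⊢; omega) x y
      simp only [List.nil_append, shuffle_nil_right, Multiset.map_singleton] at key
      simp only [List.nil_append, List.cons_append, shuffle_cons_cons, shuffle_nil_right,
        Multiset.map_singleton, Multiset.map_add, Multiset.map_map, Function.comp, key]
      abel
    | a :: xs2, b :: ys2 =>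
      have key1 := ih xs2 (b :: ys2) (by simp at h ⊢; omega) x y
      have key2 := ih (a :: xs2) ys2 (by simp at h ⊢; omega) x y
      simp only [List.cons_append] at key1 key2
      simp only [List.nil_append, List.cons_append, shuffle_cons_cons, key1, key2,
        Multiset.map_add, Multiset.map_map, Function.comp]
      abel

lemma shuffle_reverse {α : Type*} : ∀ (n : ℕ) (xs ys : List α), xs.length + ys.length ≤ n →
    shuffle xs.reverse ys.reverse = (shuffle xs ys).map List.reverse := by
  intro n
  induction n with
  | zero =>
    intro xs ys h
    have hx : xs = [] := by cases xs <;> simp_all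
    have hy : ys = [] := by cases ys <;> simp_all
    subst hx; subst hy; simp [shuffle_nil_left]
  | succ n ih =>
    intro xs ys h
    rcases List.eq_nil_or_concat xs with hx | ⟨xs', x, hx⟩
    · subst hx; simp [shuffle_nil_left]
    rcases List.eq_nil_or_concat ys with hy | ⟨ys', y, hy⟩
    · subst hy; simp [shuffle_nil_right, shuffle_nil_left]
    subst hx; subst hy
    simp only [List.concat_eq_append] at h ⊢
    have e1 := ih xs' (ys' ++ [y]) (by simp at h ⊢; omega)
    have e2 := ih (xs' ++ [x]) ys' (by simp at h ⊢; omega)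
    simp only [List.reverse_append, List.reverse_singleton, List.singleton_append] at e1 e2 ⊢
    rw [shuffle_cons_cons, e1, e2, shuffle_concat (xs'.length + ys'.length) xs' ys' le_rfl x y]
    simp [Multiset.map_map, Function.comp]

/-! ### Word evaluation -/

/-- Evaluation of a *reversed* word, with `c` pending `x`-exponents. -/
def ev : ℕ → ℕ → List Bool → ℚ
  | _, _, [] => 1
  | M, c, false :: t => ev M (c + 1) t
  | M, c, true :: t => ∑ n ∈ Finset.Ioo 0 M, ev n 0 t / (n : ℚ) ^ (c + 1)

lemma ev_false (M c : ℕ) (t : List Bool) : ev M c (false :: t) = ev M (c + 1) t := by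
  rw [ev]

lemma ev_true (M c : ℕ) (t : List Bool) :
    ev M c (true :: t) = ∑ n ∈ Finset.Ioo 0 M, ev n 0 t / (n : ℚ) ^ (c + 1) := by
  rw [ev]

lemma toIndex_append_true_rep (u : List Bool) : ∀ c : ℕ,
    toIndex (u ++ true :: List.replicate c false) = toIndex u ++ [c + 1] := by
  intro c
  induction c with
  | zero => simp [toIndex, List.foldl_append]
  | succ c ih =>
    rw [List.replicate_succ', ← List.cons_append, ← List.append_assoc] at *
    rw [toIndex, List.foldl_append, ← toIndex]
    rw [ih]
    simp

lemma ev_toIndex : ∀ (r : List Bool), r.getLast? = some true →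
    ∀ M c, zetaM M (toIndex (r.reverse ++ List.replicate c false)) = ev M c r := by
  intro r
  induction r with
  | nil => intro h; simp at h
  | cons a t ih =>
    intro h M c
    cases t with
    | nil =>
      cases a with
      | false => simp at h
      | true =>
        show zetaM M (toIndex ([] ++ true :: List.replicate c false)) = _
        rw [toIndex_append_true_rep]
        simp only [toIndex, List.foldl_nil, List.nil_append]
        rw [ev, zetaM]
        simp only [List.reverse_cons, List.reverse_nil, List.nil_append]
        rw [zetaMrev]
        simp [zetaMrev, ev]
    | cons b t2 =>
      have h' : (b :: t2).getLast? = some true := by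
        rwa [List.getLast?_cons_cons] at h
      cases a with
      | false =>
        have : (false :: b :: t2).reverse ++ List.replicate c false
            = (b :: t2).reverse ++ List.replicate (c + 1) false := by
          simp [List.replicate_succ, List.append_assoc]
        rw [this, ih h' M (c + 1), ev]
      | true =>
        have : (true :: b :: t2).reverse ++ List.replicate c false
            = (b :: t2).reverse ++ true :: List.replicate c false := by
          simp [List.append_assoc]
        rw [this, toIndex_append_true_rep, zetaM, List.reverse_append,
          List.reverse_singleton, List.singleton_append, zetaMrev, ev]
        refine Finset.sum_congr rfl fun n _ => ?_
        rw [show zetaMrev n (toIndex (b :: t2).reverse).reverse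
            = zetaM n (toIndex ((b :: t2).reverse ++ List.replicate 0 false)) by
          simp [zetaM], ih h' n 0]

lemma ev_rep_true : ∀ (b M e : ℕ),
    ev M e (List.replicate b false ++ [true]) = ∑ n ∈ Finset.Ioo 0 M, 1 / (n : ℚ) ^ (e + b + 1) := by
  intro b
  induction b with
  | zero =>
    intro M e
    simp only [List.replicate_zero, List.nil_append, ev_true]
    refine Finset.sum_congr rfl fun n _ => ?_
    rw [show ev n 0 [] = 1 from rfl]
  | succ b ih =>
    intro M e
    rw [List.replicate_succ, List.cons_append, ev_false, ih,
      show e + 1 + b + 1 = e + (b + 1) + 1 by omega]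

/-! ### Analytic lemmas for the truncated MT sums -/

lemma zetaMT_rec (M a b c : ℕ) :
    zetaMT M (a + 1) (b + 1) c = zetaMT M a (b + 1) (c + 1) + zetaMT M (a + 1) b (c + 1) := by
  unfold zetaMT
  rw [← Finset.sum_add_distrib]
  refine Finset.sum_congr rfl fun p hp => ?_
  simp only [Finset.mem_filter, Finset.mem_product, Finset.mem_Ioo] at hp
  have hm : (p.1 : ℚ) ≠ 0 := Nat.cast_ne_zero.mpr (by omega)
  have hn : (p.2 : ℚ) ≠ 0 := Nat.cast_ne_zero.mpr (by omega)
  have hs : (p.1 : ℚ) + (p.2 : ℚ) ≠ 0 := by positivity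
  field_simp
  ring

lemma zetaMT_comm (M a b c : ℕ) : zetaMT M a b c = zetaMT M b a c := by
  unfold zetaMT
  refine Finset.sum_nbij' (fun p => (p.2, p.1)) (fun p => (p.2, p.1)) ?_ ?_ ?_ ?_ ?_
  · intro p hp; simp only [Finset.mem_filter, Finset.mem_product, Finset.mem_Ioo] at *; omega
  · intro p hp; simp only [Finset.mem_filter, Finset.mem_product, Finset.mem_Ioo] at *; omega
  · intro p _; rfl
  · intro p _; rfl
  · intro p hp; simp; ring

lemma zetaMT_left_zero (M k c : ℕ) :
    zetaMT M 0 k c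
      = ∑ s ∈ Finset.Ioo 0 M, (∑ n ∈ Finset.Ioo 0 s, 1 / (n : ℚ) ^ k) / (s : ℚ) ^ c := by
  unfold zetaMT
  simp only [Finset.sum_div]
  rw [Finset.sum_sigma']
  refine Finset.sum_nbij' (fun p => (⟨p.1 + p.2, p.2⟩ : (_ : ℕ) × ℕ))
      (fun q => ((q.1 - q.2, q.2) : ℕ × ℕ)) ?_ ?_ ?_ ?_ ?_
  · intro p hp
    simp only [Finset.mem_filter, Finset.mem_product, Finset.mem_Ioo, Finset.mem_sigma] at *
    omega
  · intro q hq
    simp only [Finset.mem_filter, Finset.mem_product, Finset.mem_Ioo, Finset.mem_sigma] at *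
    omega
  · rintro ⟨m, n⟩ hp
    simp only [Finset.mem_filter, Finset.mem_product, Finset.mem_Ioo] at hp
    simp only [Prod.mk.injEq]
    exact ⟨by omega, trivial⟩
  · rintro ⟨s, n⟩ hq
    simp only [Finset.mem_sigma, Finset.mem_Ioo] at hq
    simp only [Sigma.mk.inj_iff, heq_eq_eq]
    exact ⟨by omega, trivial⟩
  · intro p hp
    simp only [Finset.mem_filter, Finset.mem_product, Finset.mem_Ioo] at hp
    push_cast
    rw [pow_zero, one_mul, div_div]

/-! ### The key induction -/

lemma key (M : ℕ) : ∀ (N a b : ℕ), a + b ≤ N → ∀ (c : ℕ),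
    zetaMT M (a + 1) (b + 1) c
      = ((shuffle (List.replicate a false ++ [true]) (List.replicate b false ++ [true])).map
          (ev M c)).sum := by
  intro N
  induction N with
  | zero =>
    intro a b h c
    have ha : a = 0 := by omega
    have hb : b = 0 := by omega
    subst ha; subst hb
    simp only [List.replicate_zero, List.nil_append, shuffle_cons_cons, shuffle_nil_left,
      shuffle_nil_right, Multiset.map_singleton, Multiset.map_add, Multiset.sum_add,
      Multiset.sum_singleton]
    rw [ev_true, zetaMT_rec, zetaMT_left_zero, zetaMT_comm M 1 0 (c + 1), zetaMT_left_zero]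
    have : ∀ s : ℕ, ev s 0 [true] = ∑ n ∈ Finset.Ioo 0 s, 1 / (n : ℚ) ^ 1 := by
      intro s
      rw [ev_true]
      exact Finset.sum_congr rfl fun n _ => by rw [show ev n 0 [] = 1 from rfl]
    simp only [this, div_eq_mul_inv, ← Finset.sum_add_distrib]
  | succ N ih =>
    intro a b h c
    match a, b with
    | 0, 0 => exact ih 0 0 (by omega) c
    | 0, b + 1 =>
      have hword : List.replicate (b + 1) false ++ [true]
          = false :: (List.replicate b false ++ [true]) := by
        simp [List.replicate_succ]
      rw [List.replicate_zero, List.nil_append, hword, shuffle_cons_cons, shuffle_nil_left]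
      simp only [Multiset.map_add, Multiset.sum_add, Multiset.map_singleton,
        Multiset.sum_singleton, Multiset.map_map]
      have e2 : ((shuffle [true] (List.replicate b false ++ [true])).map
          ((ev M c) ∘ (fun w => false :: w))).sum = zetaMT M 1 (b + 1) (c + 1) := by
        rw [ih 0 b (by omega) (c + 1), List.replicate_zero, List.nil_append]
        exact congrArg _ (Multiset.map_congr rfl fun w _ => by simp [Function.comp, ev_false])
      have e1 : ev M c (true :: (false :: (List.replicate b false ++ [true])))
          = zetaMT M 0 (b + 1 + 1) (c + 1) := by
        rw [ev_true, zetaMT_left_zero]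
        refine Finset.sum_congr rfl fun s _ => ?_
        rw [← hword, ev_rep_true]
        norm_num
      rw [zetaMT_rec, ← e1, ← e2]
    | a + 1, 0 =>
      have hword : List.replicate (a + 1) false ++ [true]
          = false :: (List.replicate a false ++ [true]) := by
        simp [List.replicate_succ]
      rw [List.replicate_zero, List.nil_append, hword, shuffle_cons_cons, shuffle_nil_right]
      simp only [Multiset.map_add, Multiset.sum_add, Multiset.map_singleton,
        Multiset.sum_singleton, Multiset.map_map]
      have e2 : ((shuffle (List.replicate a false ++ [true]) [true]).map
          ((ev M c) ∘ (fun w => false :: w))).sum = zetaMT M (a + 1) 1 (c + 1) := by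
        rw [ih a 0 (by omega) (c + 1), List.replicate_zero, List.nil_append]
        exact congrArg _ (Multiset.map_congr rfl fun w _ => by simp [Function.comp, ev_false])
      have e1 : ev M c (true :: (false :: (List.replicate a false ++ [true])))
          = zetaMT M (a + 1 + 1) 0 (c + 1) := by
        rw [ev_true, zetaMT_comm, zetaMT_left_zero]
        refine Finset.sum_congr rfl fun s _ => ?_
        rw [← hword, ev_rep_true]
        norm_num
      rw [zetaMT_rec, ← e1, ← e2]
    | a + 1, b + 1 =>
      have hworda : List.replicate (a + 1) false ++ [true]
          = false :: (List.replicate a false ++ [true]) := by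
        simp [List.replicate_succ]
      have hwordb : List.replicate (b + 1) false ++ [true]
          = false :: (List.replicate b false ++ [true]) := by
        simp [List.replicate_succ]
      rw [hworda, hwordb, shuffle_cons_cons]
      simp only [Multiset.map_add, Multiset.sum_add, Multiset.map_map]
      have e1 : ((shuffle (List.replicate a false ++ [true])
            (false :: (List.replicate b false ++ [true]))).map
          ((ev M c) ∘ (fun w => false :: w))).sum = zetaMT M (a + 1) (b + 1 + 1) (c + 1) := by
        rw [ih a (b + 1) (by omega) (c + 1), hwordb]
        exact congrArg _ (Multiset.map_congr rfl fun w _ => by simp [Function.comp, ev_false])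
      have e2 : ((shuffle (false :: (List.replicate a false ++ [true]))
            (List.replicate b false ++ [true])).map
          ((ev M c) ∘ (fun w => false :: w))).sum = zetaMT M (a + 1 + 1) (b + 1) (c + 1) := by
        rw [ih (a + 1) b (by omega) (c + 1), hworda]
        exact congrArg _ (Multiset.map_congr rfl fun w _ => by simp [Function.comp, ev_false])
      rw [zetaMT_rec, ← e1, ← e2]

lemma mem_shuffle_true {u v : List Bool} {w : List Bool}
    (hw : w ∈ shuffle (true :: u) (true :: v)) : ∃ t, w = true :: t := by
  rw [shuffle_cons_cons, Multiset.mem_add] at hw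
  rcases hw with h | h <;> obtain ⟨t, _, rfl⟩ := Multiset.mem_map.mp h <;> exact ⟨t, rfl⟩

/-- Kamano's formula: `ζ^{MT}_M(k₁,k₂;k₃) = Z_M((z_{k₁} ⧢ z_{k₂}) x^{k₃})`,
where each shuffled word, with `x^{k₃}` appended, is evaluated as the truncated
MZV of the corresponding index. -/
theorem stmt_13 (k1 k2 k3 M : ℕ) (h1 : 0 < k1) (h2 : 0 < k2) (hM : 1 ≤ M) :
    zetaMT M k1 k2 k3
      = ((shuffle (wordOf [k1]) (wordOf [k2])).map
          (fun w => zetaM M (toIndex (w ++ List.replicate k3 false)))).sum := by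

  obtain ⟨a, rfl⟩ : ∃ a, k1 = a + 1 := ⟨k1 - 1, by omega⟩
  obtain ⟨b, rfl⟩ : ∃ b, k2 = b + 1 := ⟨k2 - 1, by omega⟩
  have hw1 : wordOf [a + 1] = true :: List.replicate a false := by simp [wordOf]
  have hw2 : wordOf [b + 1] = true :: List.replicate b false := by simp [wordOf]
  have hrev : shuffle (List.replicate a false ++ [true]) (List.replicate b false ++ [true])
      = (shuffle (wordOf [a + 1]) (wordOf [b + 1])).map List.reverse := by
    rw [hw1, hw2,
      ← shuffle_reverse ((true :: List.replicate a false).length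
          + (true :: List.replicate b false).length) _ _ le_rfl]
    simp
  rw [key M (a + b) a b le_rfl k3, hrev, Multiset.map_map]
  refine congrArg _ (Multiset.map_congr rfl fun w hw => ?_)
  rw [hw1, hw2] at hw
  obtain ⟨t, rfl⟩ := mem_shuffle_true hw
  have hl : (true :: t).reverse.getLast? = some true := by
    rw [List.getLast?_reverse]; rfl
  have h := ev_toIndex ((true :: t).reverse) hl M k3
  rw [List.reverse_reverse] at h
  simpa [Function.comp] using h.symm
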